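/- Let E and F be real inner product spaces, let n ≥ 1, and let G : Fin n → E → F be a mean-square L-Lipschitz family with mean Ḡ, i.e. (1/n) ∑_{i : Fin n} ‖G i x − G i y‖² ≤ L² ‖x − y‖² for all x, y ∈ E, where Ḡ x = (1/n) ∑_{i : Fin n} G i x. Then for every x, y ∈ E, every v ∈ F, and every batch size b ≥ 1, the average over all tuples s : Fin b → Fin n of ‖(1/b) ∑_{j : Fin b} (G (s j) x − G (s j) y) + v − Ḡ x‖² is at most ‖v − Ḡ y‖² + (L²/b) ‖x − y‖². (One step of the SPIDER variance recursion, the inductive step in the proof of Lemma 3, specialized to Euclidean space where parallel transport is the identity.) -/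
import Mathlib


open Finset RealInnerProductSpace

lemma sum_eval_aux {ι : Type*} [Fintype ι] [DecidableEq ι] {n : ℕ} {M : Type*} [AddCommMonoid M]
    (f : Fin n → M) (j : ι) :
    ∑ s : ι → Fin n, f (s j) = n ^ (Fintype.card ι - 1) • ∑ i, f i := by
  rw [← (Equiv.funSplitAt j (Fin n)).symm.sum_comp]
  have : ∀ p : Fin n × ({k // k ≠ j} → Fin n),
      ((Equiv.funSplitAt j (Fin n)).symm p) j = p.1 := by
    intro p; simp [Equiv.funSplitAt, Equiv.piSplitAt]
  simp_rw [this]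
  rw [Fintype.sum_prod_type]
  simp only [Finset.sum_const, Finset.card_univ, Fintype.card_fun, ← Finset.smul_sum]
  simp [Fintype.card_subtype_compl, Fintype.card_subtype_eq]

lemma sum_eval_pair_aux {ι : Type*} [Fintype ι] [DecidableEq ι] {n : ℕ} {M : Type*}
    [AddCommMonoid M] (g : Fin n → Fin n → M) (j k : ι) (h : k ≠ j) :
    ∑ s : ι → Fin n, g (s j) (s k)
      = n ^ (Fintype.card ι - 2) • ∑ i, ∑ i', g i i' := by
  rw [← (Equiv.funSplitAt j (Fin n)).symm.sum_comp]
  have h1 : ∀ p : Fin n × ({k' // k' ≠ j} → Fin n),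
      ((Equiv.funSplitAt j (Fin n)).symm p) j = p.1 := by
    intro p; simp [Equiv.funSplitAt, Equiv.piSplitAt]
  have h2 : ∀ p : Fin n × ({k' // k' ≠ j} → Fin n),
      ((Equiv.funSplitAt j (Fin n)).symm p) k = p.2 ⟨k, h⟩ := by
    intro p; simp [Equiv.funSplitAt, Equiv.piSplitAt, h]
  simp_rw [h1, h2]
  rw [Fintype.sum_prod_type]
  have := fun x : Fin n => sum_eval_aux (g x) (⟨k, h⟩ : {k' // k' ≠ j})
  simp_rw [this]
  rw [← Finset.smul_sum]
  congr 2
  rw [Fintype.card_subtype_compl, Fintype.card_subtype_eq]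
  omega

/-- One step of the SPIDER variance recursion in Euclidean space: for a
mean-square `L`-Lipschitz family `G` with mean `Ḡ`, the average over all
tuples `s : Fin b → Fin n` of
`‖(1/b) ∑ j, (G (s j) x − G (s j) y) + v − Ḡ x‖²` is at most
`‖v − Ḡ y‖² + (L²/b) ‖x − y‖²`. -/
theorem stmt_2 {E F : Type*} [NormedAddCommGroup E] [InnerProductSpace ℝ E]
    [NormedAddCommGroup F] [InnerProductSpace ℝ F]
    (n : ℕ) (hn : 1 ≤ n) (L : ℝ) (hL : 0 ≤ L) (G : Fin n → E → F)
    (hlip : ∀ x y : E,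
      (1 / (n : ℝ)) * ∑ i : Fin n, ‖G i x - G i y‖ ^ 2 ≤ L ^ 2 * ‖x - y‖ ^ 2)
    (x y : E) (v : F) (b : ℕ) (hb : 1 ≤ b) :
    (1 / (n : ℝ) ^ b) *
        ∑ s : Fin b → Fin n,
          ‖((1 / (b : ℝ)) • ∑ j : Fin b, (G (s j) x - G (s j) y)) + v
              - (1 / (n : ℝ)) • ∑ i : Fin n, G i x‖ ^ 2
      ≤ ‖v - (1 / (n : ℝ)) • ∑ i : Fin n, G i y‖ ^ 2
          + (L ^ 2 / (b : ℝ)) * ‖x - y‖ ^ 2 := by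
  have hn0 : (0:ℝ) < (n:ℝ) := by exact_mod_cast hn
  have hb0 : (0:ℝ) < (b:ℝ) := by exact_mod_cast hb
  have hnR : (n:ℝ) ≠ 0 := hn0.ne'
  have hbR : (b:ℝ) ≠ 0 := hb0.ne'
  set D : Fin n → F := fun i => G i x - G i y with hD
  set μ : F := (1 / (n:ℝ)) • ∑ i, D i with hμ
  set Z : Fin n → F := fun i => D i - μ with hZdef
  set c : F := v - (1 / (n:ℝ)) • ∑ i, G i y with hc
  have hsumD : ∑ i, D i = (n:ℝ) • μ := by
    rw [hμ, smul_smul]; rw [mul_one_div, div_self hnR, one_smul]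
  have hZ0 : ∑ i, Z i = 0 := by
    simp only [hZdef, Finset.sum_sub_distrib, Finset.sum_const, Finset.card_univ,
      Fintype.card_fin, hsumD]
    rw [← Nat.cast_smul_eq_nsmul ℝ, sub_self]
  have key : ∀ s : Fin b → Fin n,
      ((1 / (b : ℝ)) • ∑ j : Fin b, (G (s j) x - G (s j) y)) + v
          - (1 / (n:ℝ)) • ∑ i, G i x = ((1/(b:ℝ)) • ∑ j, Z (s j)) + c := by
    intro s
    have hterm : ∀ j : Fin b, G (s j) x - G (s j) y = Z (s j) + μ := by
      intro j; simp only [hZdef, hD]; abel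
    have h1 : ∑ j : Fin b, (G (s j) x - G (s j) y) = (∑ j, Z (s j)) + (b:ℝ) • μ := by
      simp_rw [hterm]
      rw [Finset.sum_add_distrib, Finset.sum_const, Finset.card_univ, Fintype.card_fin,
        ← Nat.cast_smul_eq_nsmul ℝ]
    have h2 : μ = (1/(n:ℝ)) • ∑ i, G i x - (1/(n:ℝ)) • ∑ i, G i y := by
      rw [hμ]
      simp only [hD]
      rw [Finset.sum_sub_distrib, smul_sub]
    rw [h1, smul_add, smul_smul, one_div, inv_mul_cancel₀ hbR, one_smul, h2, hc]
    abel
  simp only [key]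
  -- variance facts
  have hVc : ∑ i : Fin n, ⟪Z i, c⟫ = 0 := by rw [← sum_inner, hZ0, inner_zero_left]
  have hZZ : ∑ i : Fin n, ∑ i' : Fin n, ⟪Z i, Z i'⟫ = 0 := by
    simp_rw [← inner_sum, hZ0, inner_zero_right, Finset.sum_const, smul_zero]
  have hdiag : ∀ j : Fin b, ∑ s : Fin b → Fin n, ⟪Z (s j), Z (s j)⟫
      = (n ^ (b-1) : ℕ) • ∑ i, ⟪Z i, Z i⟫ := by
    intro j
    have := sum_eval_aux (fun i => (⟪Z i, Z i⟫ : ℝ)) j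
    simpa using this
  have hpair : ∀ j k : Fin b, k ≠ j → ∑ s : Fin b → Fin n, ⟪Z (s j), Z (s k)⟫ = 0 := by
    intro j k h
    have := sum_eval_pair_aux (fun i i' => (⟪Z i, Z i'⟫ : ℝ)) j k h
    simpa [hZZ] using this
  -- expand square
  have hexp : ∀ s : Fin b → Fin n,
      ‖((1/(b:ℝ)) • ∑ j, Z (s j)) + c‖ ^ 2
        = ‖(1/(b:ℝ)) • ∑ j, Z (s j)‖ ^ 2 + 2 * ⟪(1/(b:ℝ)) • ∑ j, Z (s j), c⟫ + ‖c‖ ^ 2 :=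
    fun s => norm_add_sq_real _ _
  simp only [hexp]
  rw [Finset.sum_add_distrib, Finset.sum_add_distrib]
  -- cross term vanishes
  have T2 : ∑ s : Fin b → Fin n, 2 * ⟪(1/(b:ℝ)) • ∑ j, Z (s j), c⟫ = 0 := by
    have hj : ∀ j : Fin b, ∑ s : Fin b → Fin n, ⟪Z (s j), c⟫ = 0 := by
      intro j
      have := sum_eval_aux (fun i => (⟪Z i, c⟫ : ℝ)) j
      simpa [hVc] using this
    simp_rw [real_inner_smul_left, sum_inner, ← Finset.mul_sum]
    rw [Finset.sum_comm]
    simp [hj]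
  -- main term
  have T1 : ∑ s : Fin b → Fin n, ‖(1/(b:ℝ)) • ∑ j, Z (s j)‖ ^ 2
      = (1/(b:ℝ))^2 * ((b:ℝ) * ((n:ℝ) ^ (b-1) * ∑ i, ‖Z i‖ ^ 2)) := by
    have hnorm : ∀ s : Fin b → Fin n, ‖(1/(b:ℝ)) • ∑ j, Z (s j)‖ ^ 2
        = (1/(b:ℝ))^2 * ∑ j : Fin b, ∑ k : Fin b, ⟪Z (s j), Z (s k)⟫ := by
      intro s
      rw [norm_smul, mul_pow, Real.norm_eq_abs, sq_abs, ← real_inner_self_eq_norm_sq, sum_inner]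
      simp_rw [inner_sum]
    simp_rw [hnorm, ← Finset.mul_sum]
    congr 1
    rw [Finset.sum_comm]
    have : ∀ j : Fin b, ∑ s : Fin b → Fin n, ∑ k : Fin b, ⟪Z (s j), Z (s k)⟫
        = (n:ℝ) ^ (b-1) * ∑ i, ‖Z i‖ ^ 2 := by
      intro j
      rw [Finset.sum_comm]
      rw [Finset.sum_eq_single j]
      · rw [hdiag j, nsmul_eq_mul]
        push_cast
        congr 1
        exact Finset.sum_congr rfl fun i _ => real_inner_self_eq_norm_sq _
      · intro k _ hk
        exact hpair j k hk
      · intro h; exact absurd (Finset.mem_univ j) h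
    simp_rw [this]
    rw [Finset.sum_const, Finset.card_univ, Fintype.card_fin, nsmul_eq_mul]
  rw [T1, T2]
  -- constant term
  have T3 : ∑ _s : Fin b → Fin n, ‖c‖ ^ 2 = (n:ℝ) ^ b * ‖c‖ ^ 2 := by
    rw [Finset.sum_const, Finset.card_univ, Fintype.card_fun, Fintype.card_fin,
      Fintype.card_fin, nsmul_eq_mul]
    push_cast
    ring
  rw [T3]
  -- variance bound
  have hVar : ∑ i, ‖Z i‖ ^ 2 ≤ ∑ i, ‖D i‖ ^ 2 := by
    have hexp2 : ∀ i : Fin n, ‖Z i‖ ^ 2 = ‖D i‖ ^ 2 - 2 * ⟪D i, μ⟫ + ‖μ‖ ^ 2 := by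
      intro i; rw [hZdef]; exact norm_sub_sq_real _ _
    simp_rw [hexp2]
    rw [Finset.sum_add_distrib, Finset.sum_sub_distrib, ← Finset.mul_sum, ← sum_inner, hsumD,
      real_inner_smul_left, real_inner_self_eq_norm_sq, Finset.sum_const, Finset.card_univ,
      Fintype.card_fin, nsmul_eq_mul]
    nlinarith [norm_nonneg μ, sq_nonneg ‖μ‖, hn0]
  have hlipD : (1 / (n : ℝ)) * ∑ i, ‖D i‖ ^ 2 ≤ L ^ 2 * ‖x - y‖ ^ 2 := by
    simpa [hD] using hlip x y
  -- final arithmetic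
  have hpow : (n:ℝ) ^ b = (n:ℝ) ^ (b-1) * (n:ℝ) := by
    rw [← pow_succ]
    congr 1
    omega
  have hZnonneg : (0:ℝ) ≤ ∑ i, ‖Z i‖ ^ 2 := Finset.sum_nonneg fun i _ => sq_nonneg _
  have hDsum : (0:ℝ) ≤ ∑ i, ‖D i‖ ^ 2 := Finset.sum_nonneg fun i _ => sq_nonneg _
  have step : (1 / (n:ℝ) ^ b) * ((1/(b:ℝ))^2 * ((b:ℝ) * ((n:ℝ) ^ (b-1) * ∑ i, ‖Z i‖ ^ 2)) + 0
        + (n:ℝ) ^ b * ‖c‖ ^ 2)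
      = ‖c‖ ^ 2 + (1/(b:ℝ)) * ((1/(n:ℝ)) * ∑ i, ‖Z i‖ ^ 2) := by
    rw [hpow]
    have hnb1 : (n:ℝ) ^ (b-1) ≠ 0 := pow_ne_zero _ hnR
    field_simp
    ring
  rw [step]
  have : (1/(b:ℝ)) * ((1/(n:ℝ)) * ∑ i, ‖Z i‖ ^ 2) ≤ (L ^ 2 / (b:ℝ)) * ‖x - y‖ ^ 2 := by
    have h1 : (1/(n:ℝ)) * ∑ i, ‖Z i‖ ^ 2 ≤ L ^ 2 * ‖x - y‖ ^ 2 := by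
      refine le_trans ?_ hlipD
      apply mul_le_mul_of_nonneg_left hVar (by positivity)
    calc (1/(b:ℝ)) * ((1/(n:ℝ)) * ∑ i, ‖Z i‖ ^ 2) ≤ (1/(b:ℝ)) * (L ^ 2 * ‖x - y‖ ^ 2) :=
          mul_le_mul_of_nonneg_left h1 (by positivity)
      _ = (L ^ 2 / (b:ℝ)) * ‖x - y‖ ^ 2 := by ring
  linarith
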